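/- Let m : ℤ → ℕ be finitely supported with r(m) = ∑ m_i and d(m) = ∑ i·m_i, and suppose r(m) = r ≥ 1 and d(m) = d with d > ℓ·r(r−1)/2 for some ℓ ≥ 0. If m_i = 0 for all i ≤ 0 fails, i.e. m_j > 0 for some j ≤ 0, and the support of m has all consecutive gaps ≤ ℓ, then we reach a contradiction; hence under the gap condition the support lies in ℤ_{>0}. -/

import Mathlib

open Finset

private lemma gap_shrink (ℓ : ℤ) (b : ℤ) (s' : Finset ℤ) (hb : ∀ x ∈ s', x < b)
    (hgap : ∀ a ∈ insert b s', ∀ c ∈ insert b s', a < c →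
      (∀ x ∈ insert b s', ¬(a < x ∧ x < c)) → c - a ≤ ℓ) :
    ∀ a ∈ s', ∀ c ∈ s', a < c → (∀ x ∈ s', ¬(a < x ∧ x < c)) → c - a ≤ ℓ := by
  intro a ha c hc hac hno
  refine hgap a (mem_insert_of_mem ha) c (mem_insert_of_mem hc) hac ?_
  intro x hx
  rcases mem_insert.mp hx with rfl | hx
  · rintro ⟨_, h2⟩; exact absurd (hb c hc) (lt_asymm h2)
  · exact hno x hx

private lemma maxbound (ℓ : ℤ) (hℓ : 0 ≤ ℓ) (s : Finset ℤ)
    (hgap : ∀ a ∈ s, ∀ b ∈ s, a < b → (∀ x ∈ s, ¬(a < x ∧ x < b)) → b - a ≤ ℓ)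
    (h : s.Nonempty) : s.max' h ≤ s.min' h + ℓ * (s.card - 1) := by
  induction s using Finset.induction_on_max with
  | empty => exact absurd h (by simp)
  | insert b s' hb ih =>
    by_cases hs' : s'.Nonempty
    · have hmax : (insert b s').max' h = b := by
        apply le_antisymm
        · apply Finset.max'_le; intro y hy
          rcases Finset.mem_insert.mp hy with rfl | hy
          · exact le_refl _
          · exact (hb y hy).le
        · exact Finset.le_max' _ _ (Finset.mem_insert_self _ _)
      have hmin : (insert b s').min' h = s'.min' hs' := by
        apply le_antisymm
        · exact Finset.min'_le _ _ (Finset.mem_insert_of_mem (s'.min'_mem hs'))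
        · apply Finset.le_min'; intro y hy
          rcases Finset.mem_insert.mp hy with rfl | hy
          · exact (hb _ (s'.min'_mem hs')).le
          · exact Finset.min'_le _ _ hy
      have hp := ih (gap_shrink ℓ b s' hb hgap) hs'
      have hpb : b - s'.max' hs' ≤ ℓ := by
        refine hgap _ (mem_insert_of_mem (s'.max'_mem hs')) b (mem_insert_self _ _)
          (hb _ (s'.max'_mem hs')) ?_
        intro x hx
        rcases mem_insert.mp hx with rfl | hx
        · rintro ⟨_, h2⟩; exact lt_irrefl _ h2
        · rintro ⟨h1, _⟩; exact absurd (Finset.le_max' _ _ hx) (not_le.mpr h1)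
      have hcard : (insert b s').card = s'.card + 1 :=
        Finset.card_insert_of_notMem (fun hmem => lt_irrefl b (hb b hmem))
      have hc1 : 1 ≤ s'.card := Finset.card_pos.mpr hs'
      rw [hmax, hmin, hcard]
      push_cast
      have : (1:ℤ) ≤ s'.card := by exact_mod_cast hc1
      linarith
    · have : s' = ∅ := not_nonempty_iff_eq_empty.mp hs'
      subst this
      simp

private lemma sumbound (ℓ : ℤ) (hℓ : 0 ≤ ℓ) (f : ℤ → ℤ) (s : Finset ℤ)
    (hgap : ∀ a ∈ s, ∀ b ∈ s, a < b → (∀ x ∈ s, ¬(a < x ∧ x < b)) → b - a ≤ ℓ)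
    (hf : ∀ i ∈ s, 1 ≤ f i) (h : s.Nonempty) :
    2 * ∑ i ∈ s, i * f i ≤
      2 * s.min' h * (∑ i ∈ s, f i) + ℓ * (∑ i ∈ s, f i) * ((∑ i ∈ s, f i) - 1) := by
  induction s using Finset.induction_on_max with
  | empty => exact absurd h (by simp)
  | insert b s' hb ih =>
    have hbmem : b ∉ s' := fun hmem => lt_irrefl b (hb b hmem)
    rw [Finset.sum_insert hbmem, Finset.sum_insert hbmem]
    by_cases hs' : s'.Nonempty
    · have hmin : (insert b s').min' h = s'.min' hs' := by
        apply le_antisymm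
        · exact Finset.min'_le _ _ (Finset.mem_insert_of_mem (s'.min'_mem hs'))
        · apply Finset.le_min'; intro y hy
          rcases Finset.mem_insert.mp hy with rfl | hy
          · exact (hb _ (s'.min'_mem hs')).le
          · exact Finset.min'_le _ _ hy
      have hgap' := gap_shrink ℓ b s' hb hgap
      have hIH := ih hgap' (fun i hi => hf i (mem_insert_of_mem hi)) hs'
      have hmaxb := maxbound ℓ hℓ s' hgap' hs'
      have hpb : b - s'.max' hs' ≤ ℓ := by
        refine hgap _ (mem_insert_of_mem (s'.max'_mem hs')) b (mem_insert_self _ _)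
          (hb _ (s'.max'_mem hs')) ?_
        intro x hx
        rcases mem_insert.mp hx with rfl | hx
        · rintro ⟨_, h2⟩; exact lt_irrefl _ h2
        · rintro ⟨h1, _⟩; exact absurd (Finset.le_max' _ _ hx) (not_le.mpr h1)
      set M := s'.min' hs' with hM
      set R := ∑ i ∈ s', f i with hR
      set B := f b with hB
      have hB1 : 1 ≤ B := hf b (mem_insert_self _ _)
      have hcardR : (s'.card : ℤ) ≤ R := by
        have := Finset.card_nsmul_le_sum s' f 1 (fun i hi => hf i (mem_insert_of_mem hi))
        simpa using this
      have hbbd : b ≤ M + ℓ * R := by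
        have h1 : b ≤ M + ℓ * ((s'.card : ℤ) - 1) + ℓ := by linarith
        have h2 : ℓ * (s'.card : ℤ) ≤ ℓ * R := mul_le_mul_of_nonneg_left hcardR hℓ
        nlinarith
      rw [hmin]
      have hbB : b * B ≤ (M + ℓ * R) * B := by
        apply mul_le_mul_of_nonneg_right hbbd; linarith
      have h3 : 0 ≤ ℓ * (B * (B - 1)) :=
        mul_nonneg hℓ (mul_nonneg (by linarith) (by linarith))
      nlinarith [h3, hIH, hbB]
    · have : s' = ∅ := not_nonempty_iff_eq_empty.mp hs'
      subst this
      simp only [Finset.sum_empty, add_zero]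
      have hmin : (insert b (∅ : Finset ℤ)).min' h = b := by simp
      rw [hmin]
      have hB1 : 1 ≤ f b := hf b (mem_insert_self _ _)
      have hnn : 0 ≤ ℓ * f b * (f b - 1) :=
        mul_nonneg (mul_nonneg hℓ (by linarith)) (by linarith)
      linarith

/-- Lemma 3.3, combinatorial form: a finitely supported `m : ℤ → ℕ` with all
consecutive gaps in its support at most `ℓ`, rank `r ≥ 1` and degree
`d > ℓ·r(r-1)/2` cannot have `mⱼ > 0` for some `j ≤ 0`; hence the support lies
in the positive integers. -/
theorem stmt_12 (ℓ : ℤ) (hℓ : 0 ≤ ℓ) (m : ℤ →₀ ℕ)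
    (hgap : ∀ s ∈ m.support, ∀ t ∈ m.support, s < t →
      (∀ x ∈ m.support, ¬(s < x ∧ x < t)) → t - s ≤ ℓ)
    (r : ℕ) (d : ℤ)
    (hr : r = ∑ i ∈ m.support, m i) (hd : d = ∑ i ∈ m.support, i * (m i : ℤ))
    (hr1 : 1 ≤ r) (hslope : 2 * d > ℓ * (r : ℤ) * ((r : ℤ) - 1))
    (hneg : ∃ j : ℤ, j ≤ 0 ∧ 0 < m j) :
    False := by
  obtain ⟨j, hj0, hjpos⟩ := hneg
  have hjmem : j ∈ m.support := Finsupp.mem_support_iff.mpr (by omega)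
  have hne : m.support.Nonempty := ⟨j, hjmem⟩
  have hf : ∀ i ∈ m.support, 1 ≤ ((m i : ℤ)) := by
    intro i hi
    have := Finsupp.mem_support_iff.mp hi
    omega
  have hsb := sumbound ℓ hℓ (fun i => (m i : ℤ)) m.support hgap hf hne
  have hrZ : (r : ℤ) = ∑ i ∈ m.support, (m i : ℤ) := by rw [hr]; push_cast; ring
  have hmin0 : m.support.min' hne ≤ 0 := le_trans (Finset.min'_le _ _ hjmem) hj0
  have hrpos : (0:ℤ) < r := by exact_mod_cast hr1
  rw [← hrZ, ← hd] at hsb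
  nlinarith [mul_le_mul_of_nonneg_right hmin0 (le_of_lt hrpos)]
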